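/- Let n ≥ 1, let λ₁, …, λₙ be a basis of V = (ZMod 2)^n, let λ₁*, …, λₙ* be the dual basis of the dual space V*, let ξ ∈ V* be a nonzero linear functional, and let π : V* → V*/span{ξ} be the canonical quotient map. Then every subfamily of n−1 of the vectors π(λ₁*), …, π(λₙ*) is linearly independent in V*/span{ξ} if and only if ξ(λᵢ) = 1 for every i = 1, …, n. -/

import Mathlib

/-- Let `λ₁, …, λₙ` be a basis of `V = (ZMod 2)^n` with dual basis `λ₁*, …, λₙ*`, let
`ξ ∈ V*` be nonzero, and let `π : V* → V*/span{ξ}` be the quotient map.  Then every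
subfamily of `n-1` of the vectors `π(λ₁*), …, π(λₙ*)` is linearly independent if and only
if `ξ(λᵢ) = 1` for every `i`. -/
theorem general_position_iff_orientability_condition
    (n : ℕ) (hn : 1 ≤ n)
    (lam : Module.Basis (Fin n) (ZMod 2) (Fin n → ZMod 2))
    (ξ : Module.Dual (ZMod 2) (Fin n → ZMod 2)) (hξ : ξ ≠ 0) :
    (∀ i : Fin n,
        LinearIndependent (ZMod 2) fun j : {j : Fin n // j ≠ i} =>
          (Submodule.span (ZMod 2) {ξ}).mkQ (lam.dualBasis j)) ↔
      ∀ i : Fin n, ξ (lam i) = 1 := by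
  have h2 : ∀ x : ZMod 2, x = 0 ∨ x = 1 := by decide
  -- expansion of ξ in the dual basis
  have hexp : ∑ j, ξ (lam j) • lam.dualBasis j = ξ := by
    have := lam.dualBasis.sum_repr ξ
    simp only [Module.Basis.dualBasis_repr] at this
    exact this
  constructor
  · intro hli i
    rcases h2 (ξ (lam i)) with h0 | h1
    · exfalso
      have key := (Fintype.linearIndependent_iff.mp (hli i))
        (fun j => ξ (lam (j : Fin n)))
      have hsum : ∑ j : {j : Fin n // j ≠ i}, ξ (lam (j : Fin n)) • lam.dualBasis (j : Fin n)
          = ξ := by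
        have hs : ∑ j ∈ Finset.univ.erase i, ξ (lam j) • lam.dualBasis j
            = ∑ j : {j : Fin n // j ≠ i}, ξ (lam (j : Fin n)) • lam.dualBasis (j : Fin n) := by
          apply Finset.sum_subtype
          intro x; simp
        rw [← hs]
        rw [Finset.sum_erase_eq_sub (Finset.mem_univ i), hexp, h0, zero_smul, sub_zero]
      have hzero : ∑ j : {j : Fin n // j ≠ i},
          ξ (lam (j : Fin n)) • (Submodule.span (ZMod 2) {ξ}).mkQ (lam.dualBasis (j : Fin n))
          = 0 := by
        simp only [← map_smul, ← map_sum, hsum]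
        rw [Submodule.mkQ_apply, Submodule.Quotient.mk_eq_zero]
        exact Submodule.mem_span_singleton_self ξ
      have hall := key hzero
      -- so ξ (lam j) = 0 for all j ≠ i, combined with h0, ξ = 0
      apply hξ
      apply lam.ext
      intro j
      by_cases hji : j = i
      · simpa [hji] using h0
      · simpa using hall ⟨j, hji⟩
    · exact h1
  · intro h1 i
    rw [Fintype.linearIndependent_iff]
    intro g hg
    have hmem : (∑ j : {j : Fin n // j ≠ i}, g j • lam.dualBasis (j : Fin n))
        ∈ Submodule.span (ZMod 2) {ξ} := by
      rw [← Submodule.Quotient.mk_eq_zero, ← Submodule.mkQ_apply, map_sum]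
      simpa using hg
    rw [Submodule.mem_span_singleton] at hmem
    obtain ⟨t, ht⟩ := hmem
    have ht0 : t = 0 := by
      have := congrArg (fun f : Module.Dual (ZMod 2) (Fin n → ZMod 2) => f (lam i)) ht.symm
      simp only [LinearMap.smul_apply, smul_eq_mul, h1 i, mul_one,
        LinearMap.coe_sum, Finset.sum_apply] at this
      rw [← this]
      apply Finset.sum_eq_zero
      intro j _
      simp [Module.Basis.dualBasis_apply_self, j.2, Ne.symm j.2]
    rw [ht0, zero_smul] at ht
    have hli : LinearIndependent (ZMod 2)
        (fun j : {j : Fin n // j ≠ i} => lam.dualBasis (j : Fin n)) :=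
      lam.dualBasis.linearIndependent.comp _ Subtype.val_injective
    exact Fintype.linearIndependent_iff.mp hli g (by rw [ht])
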